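/- Let T be a finite nonempty type, let Q_1, …, Q_n be strictly positive probability distributions on T, and let λ_1, …, λ_n be real numbers with c := ∑_{i=1}^n λ_i > 0. Then the unique probability distribution P on T minimizing the linear combination ∑_{i=1}^n λ_i · D_KL(P‖Q_i) over all probability distributions on T is the weighted geometric-mean distribution P*(x) = (∏_{i=1}^n Q_i(x)^{λ_i/c}) / ∑_{y ∈ T} ∏_{i=1}^n Q_i(y)^{λ_i/c}. -/

import Mathlib

open Finset

lemma kl_pointwise_aux {p s : ℝ} (hs : 0 < s) (hp : 0 ≤ p) :
    p - s ≤ p * Real.log (p / s) ∧ (p ≠ s → p - s < p * Real.log (p / s)) := by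
  rcases eq_or_lt_of_le hp with h | hp0
  · constructor
    · simp [← h]; linarith
    · intro _; simp [← h]; linarith
  · have hsp : 0 < s / p := div_pos hs hp0
    have hlog : Real.log (p / s) = - Real.log (s / p) := by
      rw [← Real.log_inv]; congr 1; field_simp
    have hps : p * (s / p) = s := by field_simp
    constructor
    · have h1 : Real.log (s / p) ≤ s / p - 1 := Real.log_le_sub_one_of_pos hsp
      rw [hlog]; nlinarith [mul_le_mul_of_nonneg_left h1 hp0.le]
    · intro hne
      have hne1 : s / p ≠ 1 := by
        intro h; apply hne; field_simp at h; linarith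
      have h2 : Real.log (s / p) < s / p - 1 := Real.log_lt_sub_one_of_pos hsp hne1
      rw [hlog]; nlinarith [mul_lt_mul_of_pos_left h2 hp0]

lemma gibbs_aux {T : Type*} [Fintype T] (S P : T → ℝ)
    (hS : ∀ x, 0 < S x) (hP : ∀ x, 0 ≤ P x)
    (hSsum : ∑ x, S x = 1) (hPsum : ∑ x, P x = 1) :
    0 ≤ ∑ x, P x * Real.log (P x / S x) ∧
    (∑ x, P x * Real.log (P x / S x) ≤ 0 → P = S) := by
  have hle : ∀ x ∈ Finset.univ, P x - S x ≤ P x * Real.log (P x / S x) :=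
    fun x _ => (kl_pointwise_aux (hS x) (hP x)).1
  have hsum0 : ∑ x, (P x - S x) = 0 := by rw [Finset.sum_sub_distrib, hPsum, hSsum]; ring
  constructor
  · calc (0:ℝ) = ∑ x, (P x - S x) := hsum0.symm
      _ ≤ _ := Finset.sum_le_sum hle
  · intro h
    by_contra hne
    obtain ⟨x0, hx0⟩ : ∃ x, P x ≠ S x := by
      by_contra h'; push_neg at h'; exact hne (funext h')
    have := Finset.sum_lt_sum hle
      ⟨x0, Finset.mem_univ x0, (kl_pointwise_aux (hS x0) (hP x0)).2 hx0⟩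
    rw [hsum0] at this
    linarith

/-- **Linear combination of KL divergences.** For strictly positive distributions
`Q 1, …, Q n` and weights `l 1, …, l n` with `c = ∑ i, l i > 0`, the unique probability
distribution minimizing `∑ i, l i · D_KL(P‖Q i)` is the weighted geometric mean
`Pstar x = (∏ i, Q i x ^ (l i / c)) / ∑ y, ∏ i, Q i y ^ (l i / c)`. -/
theorem linear_combination_KL_optimality
    {T : Type*} [Fintype T] [Nonempty T] {n : ℕ}
    (Q : Fin n → T → ℝ) (l : Fin n → ℝ) (c : ℝ)
    (hQpos : ∀ i x, 0 < Q i x) (hQsum : ∀ i, ∑ x, Q i x = 1)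
    (hc : c = ∑ i, l i) (hcpos : 0 < c)
    (Pstar : T → ℝ)
    (hPstar : ∀ x, Pstar x =
      (∏ i, Q i x ^ (l i / c)) / ∑ y, ∏ i, Q i y ^ (l i / c)) :
    ((∀ x, 0 ≤ Pstar x) ∧ ∑ x, Pstar x = 1) ∧
    (∀ P : T → ℝ, (∀ x, 0 ≤ P x) → ∑ x, P x = 1 →
      (∑ i, l i * ∑ x, Pstar x * Real.log (Pstar x / Q i x)) ≤
        (∑ i, l i * ∑ x, P x * Real.log (P x / Q i x))) ∧
    (∀ P : T → ℝ, (∀ x, 0 ≤ P x) → ∑ x, P x = 1 →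
      (∀ P' : T → ℝ, (∀ x, 0 ≤ P' x) → ∑ x, P' x = 1 →
        (∑ i, l i * ∑ x, P x * Real.log (P x / Q i x)) ≤
          (∑ i, l i * ∑ x, P' x * Real.log (P' x / Q i x))) →
      P = Pstar) := by
  have hc0 : c ≠ 0 := ne_of_gt hcpos
  have hGpos : ∀ x, 0 < ∏ i, Q i x ^ (l i / c) := fun x =>
    Finset.prod_pos fun i _ => Real.rpow_pos_of_pos (hQpos i x) _
  have hZpos : (0:ℝ) < ∑ y, ∏ i, Q i y ^ (l i / c) :=
    Finset.sum_pos (fun y _ => hGpos y) Finset.univ_nonempty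
  have hPpos : ∀ x, 0 < Pstar x := fun x => by
    rw [hPstar x]; exact div_pos (hGpos x) hZpos
  have hPsum : ∑ x, Pstar x = 1 := by
    simp_rw [hPstar]
    rw [← Finset.sum_div, div_self (ne_of_gt hZpos)]
  have hlogG : ∀ x, c * Real.log (∏ i, Q i x ^ (l i / c)) = ∑ i, l i * Real.log (Q i x) := by
    intro x
    rw [Real.log_prod (fun i _ => ne_of_gt (Real.rpow_pos_of_pos (hQpos i x) _)),
      Finset.mul_sum]
    refine Finset.sum_congr rfl fun i _ => ?_
    rw [Real.log_rpow (hQpos i x)]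
    field_simp
  -- Key identity: the objective equals c·D_KL(P‖Pstar) − c·log Z·(∑ P)
  have key : ∀ P : T → ℝ, (∀ x, 0 ≤ P x) →
      (∑ i, l i * ∑ x, P x * Real.log (P x / Q i x))
        = c * (∑ x, P x * Real.log (P x / Pstar x))
          - c * Real.log (∑ y, ∏ i, Q i y ^ (l i / c)) * (∑ x, P x) := by
    intro P hP
    simp_rw [Finset.mul_sum]
    rw [Finset.sum_comm, ← Finset.sum_sub_distrib]
    refine Finset.sum_congr rfl fun x _ => ?_
    rcases eq_or_lt_of_le (hP x) with h0 | hx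
    · simp [← h0]
    · have e1 : ∀ i, Real.log (P x / Q i x) = Real.log (P x) - Real.log (Q i x) :=
        fun i => Real.log_div (ne_of_gt hx) (ne_of_gt (hQpos i x))
      have e2 : Real.log (P x / Pstar x)
          = Real.log (P x) - Real.log (∏ i, Q i x ^ (l i / c))
            + Real.log (∑ y, ∏ i, Q i y ^ (l i / c)) := by
        rw [hPstar x, Real.log_div (ne_of_gt hx) (ne_of_gt (div_pos (hGpos x) hZpos)),
          Real.log_div (ne_of_gt (hGpos x)) (ne_of_gt hZpos)]
        ring
      simp_rw [e1, e2]
      have : ∑ i, l i * (P x * (Real.log (P x) - Real.log (Q i x)))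
          = (∑ i, l i) * (P x * Real.log (P x)) - P x * ∑ i, l i * Real.log (Q i x) := by
        rw [Finset.sum_mul, Finset.mul_sum, ← Finset.sum_sub_distrib]
        refine Finset.sum_congr rfl fun i _ => by ring
      rw [this, ← hc, ← hlogG x]
      ring
  have hzero : ∑ x, Pstar x * Real.log (Pstar x / Pstar x) = 0 := by
    refine Finset.sum_eq_zero fun x _ => ?_
    rw [div_self (ne_of_gt (hPpos x)), Real.log_one, mul_zero]
  refine ⟨⟨fun x => (hPpos x).le, hPsum⟩, ?_, ?_⟩
  · intro P hP hPs
    rw [key P hP, key Pstar (fun x => (hPpos x).le), hzero, hPs, hPsum]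
    have h0 := (gibbs_aux Pstar P hPpos hP hPsum hPs).1
    nlinarith
  · intro P hP hPs hmin
    have hle := hmin Pstar (fun x => (hPpos x).le) hPsum
    rw [key P hP, key Pstar (fun x => (hPpos x).le), hzero, hPs, hPsum] at hle
    have hklle : ∑ x, P x * Real.log (P x / Pstar x) ≤ 0 := by nlinarith
    exact (gibbs_aux Pstar P hPpos hP hPsum hPs).2 hklle
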